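/- If ψ : Ω → ℝ⁴ is a smooth solution of the continuous 2-D Euler adjoint equation −Aᵀ∂_xψ − Bᵀ∂_yψ = 0, where A, B are the flux Jacobians evaluated at a smooth Euler solution W, then at every point ⟨U, ∇ψ₁⟩ − H⟨U, ∇ψ₄⟩ = 0, i.e., U·∇ψ₁ = H U·∇ψ₄. -/
import Mathlib


/-- The 2-D Euler flux Jacobian in the direction `(nx, ny)`:  `An γ u v H nx ny = nx • A + ny • B`,
where `A`, `B` are the Jacobians of the Euler fluxes w.r.t. conservative variables. -/
noncomputable def An (γ u v H nx ny : ℝ) : Matrix (Fin 4) (Fin 4) ℝ :=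
  !![0, nx, ny, 0;
     (γ-1)*((u^2+v^2)/2)*nx - u*(u*nx+v*ny), (u*nx+v*ny)-(γ-2)*u*nx, u*ny-(γ-1)*v*nx, (γ-1)*nx;
     (γ-1)*((u^2+v^2)/2)*ny - v*(u*nx+v*ny), v*nx-(γ-1)*u*ny, (u*nx+v*ny)-(γ-2)*v*ny, (γ-1)*ny;
     ((γ-1)*((u^2+v^2)/2)-H)*(u*nx+v*ny), H*nx-(γ-1)*u*(u*nx+v*ny), H*ny-(γ-1)*v*(u*nx+v*ny), γ*(u*nx+v*ny)]

/- If ψ is a (pointwise differentiable) solution of the continuous 2-D Euler adjoint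
equation −Aᵀ∂ₓψ − Bᵀ∂_yψ = 0, then U·∇ψ₁ = H U·∇ψ₄ at every such point. -/
theorem adjoint_convected_relation (γ : ℝ) (hγ : 1 < γ)
    (ρ u v E H : ℝ × ℝ → ℝ) (ψ : ℝ × ℝ → Fin 4 → ℝ) (z : ℝ × ℝ)
    (hρ : ∀ q, 0 < ρ q)
    (hH : ∀ q, H q = E q + (γ-1) * (E q - (u q^2 + v q^2)/2))
    (hψ : ∀ i, DifferentiableAt ℝ (fun q => ψ q i) z)
    (hadj :
      (An γ (u z) (v z) (H z) 1 0).transpose.mulVec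
          (fun i => fderiv ℝ (fun q => ψ q i) z ((1 : ℝ), (0 : ℝ)))
      + (An γ (u z) (v z) (H z) 0 1).transpose.mulVec
          (fun i => fderiv ℝ (fun q => ψ q i) z ((0 : ℝ), (1 : ℝ))) = 0) :
    u z * fderiv ℝ (fun q => ψ q 0) z ((1 : ℝ), (0 : ℝ))
      + v z * fderiv ℝ (fun q => ψ q 0) z ((0 : ℝ), (1 : ℝ))
    = H z * (u z * fderiv ℝ (fun q => ψ q 3) z ((1 : ℝ), (0 : ℝ))
      + v z * fderiv ℝ (fun q => ψ q 3) z ((0 : ℝ), (1 : ℝ))) := by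
  have h0 := congrFun hadj 0
  have h1 := congrFun hadj 1
  have h2 := congrFun hadj 2
  simp only [An, Matrix.mulVec, dotProduct, Fin.sum_univ_four, Matrix.transpose_apply,
    Pi.add_apply, Pi.zero_apply, Matrix.cons_val', Matrix.cons_val_zero, Matrix.cons_val_one,
    Matrix.head_cons, Matrix.head_fin_const, Matrix.empty_val', Matrix.cons_val_fin_one,
    Matrix.cons_val_two, Matrix.cons_val_three, Matrix.tail_cons, Matrix.of_apply] at h0 h1 h2
  linear_combination 2 * h0 + u z * h1 + v z * h2
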